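/- Let m ∈ ℕ and let λ₁, λ₂ be real numbers with m ≤ λ₁ < λ₂. Let F : T³ → ℝ be a smooth (T³/m)-periodic function which is constant in the x₃-direction (F(x + t e₃) = F(x) for all t ∈ ℝ). Then for every integer N ≥ 0: (i) ‖D^N P_{[λ₁,λ₂)} F‖_{L∞(T³)} ≤ C(N) (λ₂/m)² λ₂^N ‖F‖_{L¹(T³)}; and (ii) for every integer d ≥ 1, the function ϑ := (λ₁^{−2}Δ)^{−d} P_{[λ₁,λ₂)} F, defined by multiplying the Fourier coefficient of frequency k (with λ₁ ≤ |k| < λ₂) by (λ₁/|k|)^{2d}, satisfies ‖D^N ϑ‖_{L∞(T³)} ≤ C(N,d) (λ₂/m)² λ₁^{min(N,2d)} λ₂^{max(N−2d,0)} ‖F‖_{L¹(T³)}. The constants are independent of m, λ₁, λ₂ and F. -/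

import Mathlib

open MeasureTheory

noncomputable section

/-- The `j`-th standard basis vector of `ℝ³`. -/
def e3 (j : Fin 3) : Fin 3 → ℝ := Pi.single j 1

/-- The fundamental domain `[-π,π]³` of the torus `𝕋³`. -/
def T3 : Set (Fin 3 → ℝ) := {x | ∀ i, x i ∈ Set.Icc (-Real.pi) Real.pi}

/-- The Euclidean norm of a frequency `k ∈ ℤ³`. -/
def knorm (k : Fin 3 → ℤ) : ℝ := Real.sqrt (∑ i, ((k i : ℝ))^2)

/-- The `k`-th Fourier coefficient of a function on `𝕋³`. -/
def fourierCoeff3 (F : (Fin 3 → ℝ) → ℝ) (k : Fin 3 → ℤ) : ℂ :=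
  (((2 * Real.pi)⁻¹ : ℝ) ^ (3:ℕ)) •
    ∫ x in T3, (F x : ℂ) * Complex.exp (-Complex.I * ∑ i, (k i : ℂ) * (x i : ℂ))

/-- The Fourier projection onto frequencies `λ₁ ≤ |k| < λ₂`, with each Fourier coefficient
multiplied by the weight `w k` (take `w = 1` for the plain projection `P_{[λ₁,λ₂)}`). -/
def fourierProj (w : (Fin 3 → ℤ) → ℝ) (l₁ l₂ : ℝ) (F : (Fin 3 → ℝ) → ℝ)
    (x : Fin 3 → ℝ) : ℂ :=
  ∑' k : Fin 3 → ℤ,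
    if l₁ ≤ knorm k ∧ knorm k < l₂ then
      (w k : ℂ) * fourierCoeff3 F k * Complex.exp (Complex.I * ∑ i, (k i : ℂ) * (x i : ℂ))
    else 0

namespace PipeAux

open Pointwise

lemma twoPi_pos : (0:ℝ) < 2 * Real.pi := by positivity

/-- The basis `2π e_i` of the period lattice. -/
def bb : Module.Basis (Fin 3) ℝ (Fin 3 → ℝ) :=
  (Pi.basisFun ℝ (Fin 3)).unitsSMul (fun _ => Units.mk0 (2*Real.pi) (by positivity))

/-- The period lattice `(2πℤ)³`. -/
def lat3 : Submodule ℤ (Fin 3 → ℝ) := Submodule.span ℤ (Set.range ⇑bb)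

instance : Countable ↥lat3 := by unfold lat3; infer_instance

instance : MeasurableVAdd ↥lat3 (Fin 3 → ℝ) :=
  (inferInstance : MeasurableVAdd lat3.toAddSubgroup _)

instance : VAddInvariantMeasure ↥lat3 (Fin 3 → ℝ) volume :=
  (inferInstance : VAddInvariantMeasure lat3.toAddSubgroup _ volume)

lemma bb_apply (i : Fin 3) : (bb i : Fin 3 → ℝ) = (2*Real.pi) • (e3 i) := by
  simp [bb, Module.Basis.unitsSMul_apply, Units.smul_def, Pi.basisFun_apply, e3]

lemma mem_fd {x : Fin 3 → ℝ} :
    x ∈ ZSpan.fundamentalDomain bb ↔ ∀ i, x i ∈ Set.Ico (0:ℝ) (2*Real.pi) := by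
  have h : ∀ i, bb.repr x i = (2*Real.pi)⁻¹ * x i := fun i => by
    rw [bb, Module.Basis.repr_unitsSMul, Pi.basisFun_repr]; simp [Units.smul_def]
  rw [ZSpan.mem_fundamentalDomain]
  simp_rw [h, Set.mem_Ico, inv_mul_eq_div, div_lt_one twoPi_pos, le_div_iff₀ twoPi_pos, zero_mul]

lemma vadd_coe (v : ↥lat3) (x : Fin 3 → ℝ) : v +ᵥ x = (v : Fin 3 → ℝ) + x := rfl

/-- Translates of the fundamental domain are fundamental domains. -/
lemma fd_vadd (a : Fin 3 → ℝ) :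
    IsAddFundamentalDomain ↥lat3 (a +ᵥ ZSpan.fundamentalDomain bb) volume := by
  apply IsAddFundamentalDomain.mk'
  · exact ((ZSpan.fundamentalDomain_measurableSet bb).const_vadd a).nullMeasurableSet
  · intro x
    have key : ∀ h : ↥lat3, (h +ᵥ x ∈ a +ᵥ ZSpan.fundamentalDomain bb) ↔
        h +ᵥ (x - a) ∈ ZSpan.fundamentalDomain bb := by
      intro h
      rw [Set.mem_vadd_set_iff_neg_vadd_mem]
      have e : (-a) +ᵥ (h +ᵥ x) = h +ᵥ (x - a) := by
        rw [vadd_coe]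
        show -a + ((h : Fin 3 → ℝ) + x) = (h : Fin 3 → ℝ) + (x - a)
        abel
      rw [e]
    obtain ⟨g, hg, hu⟩ := ZSpan.exist_unique_vadd_mem_fundamentalDomain bb (x - a)
    exact ⟨g, (key g).mpr hg, fun y hy => hu y ((key y).mp hy)⟩

/-- Invariance under the lattice follows from invariance under the generators. -/
lemma lat3_invariant {G : (Fin 3 → ℝ) → ℂ}
    (h : ∀ (x : Fin 3 → ℝ) (j : Fin 3), G (x + (2*Real.pi) • e3 j) = G x)
    (l : ↥lat3) (x : Fin 3 → ℝ) : G (l +ᵥ x) = G x := by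
  have main : ∀ y ∈ Submodule.span ℤ (Set.range ⇑bb), ∀ x, G (x + y) = G x := by
    intro y hy
    induction hy using Submodule.span_induction with
    | mem y hy =>
      obtain ⟨i, rfl⟩ := hy
      intro x
      rw [bb_apply]
      exact h x i
    | zero => intro x; rw [add_zero]
    | add y z _ _ hy hz =>
      intro x
      have e : x + (y + z) = (x + y) + z := by abel
      rw [e, hz (x + y), hy x]
    | smul n y _ hy =>
      have hnat : ∀ (n : ℕ) (x), G (x + n • y) = G x := by
        intro n
        induction n with
        | zero => intro x; simp
        | succ n ih =>
          intro x
          have e : x + (n + 1) • y = (x + y) + n • y := by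
            rw [succ_nsmul]; abel
          rw [e, ih (x + y), hy x]
      intro x
      match n with
      | Int.ofNat n =>
        have e : (Int.ofNat n) • y = n • y := by
          simp [Int.ofNat_eq_coe, natCast_zsmul]
        rw [e]; exact hnat n x
      | Int.negSucc n =>
        have e : (Int.negSucc n) • y = -((n+1) • y) := by
          rw [negSucc_zsmul]
        have := hnat (n+1) (x - (n+1) • y)
        have e2 : x - (n+1) • y + (n+1) • y = x := by abel
        rw [e2] at this
        rw [e, ← sub_eq_add_neg]
        exact this.symm
  have hx := main (l : Fin 3 → ℝ) l.2 x
  rw [vadd_coe, add_comm]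
  exact hx

lemma hyperplane_null (i : Fin 3) (c : ℝ) : volume {x : Fin 3 → ℝ | x i = c} = 0 := by
  have he : {x : Fin 3 → ℝ | x i = c} =
      Set.pi Set.univ (fun j => if j = i then ({c} : Set ℝ) else Set.univ) := by
    ext x
    simp only [Set.mem_setOf_eq, Set.mem_pi, Set.mem_univ, true_implies]
    constructor
    · intro hx j
      by_cases hj : j = i
      · subst hj; simp [hx]
      · simp [hj]
    · intro hx
      have := hx i
      simpa using this
  rw [he, MeasureTheory.volume_pi_pi]
  refine Finset.prod_eq_zero (Finset.mem_univ i) ?_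
  simp

lemma T3_ae_eq :
    T3 =ᵐ[volume] ((fun _ : Fin 3 => -Real.pi) +ᵥ ZSpan.fundamentalDomain bb : Set (Fin 3 → ℝ)) := by
  set A : Set (Fin 3 → ℝ) := (fun _ : Fin 3 => -Real.pi) +ᵥ ZSpan.fundamentalDomain bb with hA
  have hmem : ∀ x : Fin 3 → ℝ, x ∈ A ↔ ∀ i, x i ∈ Set.Ico (-Real.pi) Real.pi := by
    intro x
    rw [hA, Set.mem_vadd_set_iff_neg_vadd_mem]
    have hv : (-(fun _ => -Real.pi) : Fin 3 → ℝ) +ᵥ x = fun i => Real.pi + x i := by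
      rw [vadd_eq_add]
      funext i
      simp
    rw [hv]
    rw [mem_fd]
    refine forall_congr' fun i => ?_
    simp only [Set.mem_Ico]
    constructor
    · rintro ⟨h1, h2⟩; constructor <;> linarith
    · rintro ⟨h1, h2⟩; constructor <;> linarith
  rw [Filter.eventuallyEq_set]
  rw [MeasureTheory.ae_iff]
  refine measure_mono_null (fun x hx => ?_) (measure_iUnion_null
    (fun i => hyperplane_null i Real.pi))
  simp only [Set.mem_setOf_eq] at hx
  have hx' : ¬ (x ∈ T3 ↔ x ∈ A) := hx
  rw [hmem x] at hx'
  have hT : x ∈ T3 := by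
    by_contra hT
    apply hx'
    constructor
    · intro h; exact absurd h hT
    · intro h
      exact absurd (fun i => Set.Ico_subset_Icc_self (h i)) hT
  have hnA : ¬ ∀ i, x i ∈ Set.Ico (-Real.pi) Real.pi := fun h => hx' ⟨fun _ => h, fun _ => hT⟩
  push_neg at hnA
  obtain ⟨i, hi⟩ := hnA
  have h1 := hT i
  simp only [Set.mem_Icc] at h1
  simp only [Set.mem_Ico, not_and, not_lt] at hi
  have : x i = Real.pi := le_antisymm h1.2 (hi h1.1)
  exact Set.mem_iUnion.2 ⟨i, this⟩

lemma setIntegral_shift_right (G : (Fin 3 → ℝ) → ℂ) {s : Set (Fin 3 → ℝ)}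
    (hs : MeasurableSet s) (v : Fin 3 → ℝ) :
    ∫ x in s, G (x + v) = ∫ x in (v +ᵥ s), G x := by
  rw [← MeasureTheory.integral_indicator hs, ← MeasureTheory.integral_indicator (hs.const_vadd v)]
  rw [← integral_add_right_eq_self (fun x => ((v +ᵥ s).indicator G) x) v]
  congr 1
  funext x
  by_cases hx : x ∈ s
  · rw [Set.indicator_of_mem hx, Set.indicator_of_mem]
    exact ⟨x, hx, add_comm v x⟩
  · rw [Set.indicator_of_notMem hx, Set.indicator_of_notMem]
    rintro ⟨y, hy, hyx⟩
    have h' : v + y = x + v := hyx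
    rw [add_comm x v] at h'
    exact hx ((add_left_cancel h') ▸ hy)

/-- Integrals of fully periodic functions over `T3` are shift invariant. -/
lemma integral_T3_shift (G : (Fin 3 → ℝ) → ℂ)
    (h : ∀ (x : Fin 3 → ℝ) (j : Fin 3), G (x + (2*Real.pi) • e3 j) = G x)
    (v : Fin 3 → ℝ) :
    ∫ x in T3, G (x + v) = ∫ x in T3, G x := by
  have hGl : ∀ (l : ↥lat3) (x : Fin 3 → ℝ), G (l +ᵥ x) = G x := lat3_invariant h
  have haeq := T3_ae_eq
  calc ∫ x in T3, G (x + v)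
      = ∫ x in ((fun _ : Fin 3 => -Real.pi) +ᵥ ZSpan.fundamentalDomain bb), G (x + v) :=
        setIntegral_congr_set haeq
    _ = ∫ x in (v +ᵥ ((fun _ : Fin 3 => -Real.pi) +ᵥ ZSpan.fundamentalDomain bb)), G x :=
        setIntegral_shift_right G
          ((ZSpan.fundamentalDomain_measurableSet bb).const_vadd _) v
    _ = ∫ x in ((v + fun _ => -Real.pi) +ᵥ ZSpan.fundamentalDomain bb), G x := by
        rw [vadd_vadd]
    _ = ∫ x in ((fun _ : Fin 3 => -Real.pi) +ᵥ ZSpan.fundamentalDomain bb), G x :=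
        (fd_vadd _).setIntegral_eq (fd_vadd _) hGl
    _ = ∫ x in T3, G x := (setIntegral_congr_set haeq).symm

lemma exp_sum_split (k : Fin 3 → ℤ) (x v : Fin 3 → ℝ) :
    (∑ i, (k i:ℂ) * (((x + v) i : ℝ) :ℂ)) =
      (∑ i, (k i:ℂ) * ((x i : ℝ):ℂ)) + ∑ i, (k i:ℂ) * ((v i : ℝ):ℂ) := by
  rw [← Finset.sum_add_distrib]
  refine Finset.sum_congr rfl fun i _ => ?_
  have : ((x + v) i : ℝ) = x i + v i := rfl
  rw [this]
  push_cast
  ring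

lemma sum_single_smul (k : Fin 3 → ℤ) (t : ℝ) (j : Fin 3) :
    (∑ i, (k i:ℂ) * (((t • e3 j) i : ℝ) : ℂ)) = (k j :ℂ) * (t:ℂ) := by
  have h : ∀ i, ((t • e3 j) i : ℝ) = if i = j then t else 0 := by
    intro i
    simp [e3, Pi.single_apply]
  calc (∑ i, (k i:ℂ) * (((t • e3 j) i : ℝ) : ℂ))
      = ∑ i, (if i = j then (k i:ℂ) * (t:ℂ) else 0) := by
        refine Finset.sum_congr rfl fun i _ => ?_
        rw [h i]
        split_ifs with hi
        · rfl
        · simp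
    _ = (k j : ℂ) * (t:ℂ) := by rw [Finset.sum_ite_eq' Finset.univ j]; simp

/-- If `F` is invariant under translation by `v` and fully `2π`-periodic, and the character
does not trivialise on `v`, the Fourier coefficient vanishes. -/
lemma coeff_eq_zero {F : (Fin 3 → ℝ) → ℝ} {k : Fin 3 → ℤ} {v : Fin 3 → ℝ}
    (h2π : ∀ (x : Fin 3 → ℝ) (j : Fin 3), F (x + (2*Real.pi) • e3 j) = F x)
    (hv : ∀ x : Fin 3 → ℝ, F (x + v) = F x)
    (hE : Complex.exp (-Complex.I * ∑ i, (k i:ℂ) * ((v i : ℝ):ℂ)) ≠ 1) :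
    fourierCoeff3 F k = 0 := by
  set G : (Fin 3 → ℝ) → ℂ :=
    fun x => (F x : ℂ) * Complex.exp (-Complex.I * ∑ i, (k i : ℂ) * ((x i : ℝ) : ℂ)) with hG
  set E : ℂ := Complex.exp (-Complex.I * ∑ i, (k i:ℂ) * ((v i : ℝ):ℂ)) with hEdef
  have hGper : ∀ (x : Fin 3 → ℝ) (j : Fin 3), G (x + (2*Real.pi) • e3 j) = G x := by
    intro x j
    rw [hG]
    simp only
    rw [h2π x j, exp_sum_split, sum_single_smul, mul_add, Complex.exp_add]
    have h1 : Complex.exp (-Complex.I * ((k j : ℂ) * ((2*Real.pi : ℝ):ℂ))) = 1 := by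
      have e : (-Complex.I * ((k j:ℂ) * ((2*Real.pi:ℝ):ℂ)))
          = ((-(k j) : ℤ):ℂ) * (2 * (Real.pi:ℂ) * Complex.I) := by
        push_cast
        ring
      rw [e, Complex.exp_int_mul_two_pi_mul_I]
    rw [h1, mul_one]
  have hshift := integral_T3_shift G hGper v
  have hGv : ∀ x, G (x + v) = G x * E := by
    intro x
    rw [hG]
    simp only
    rw [hv x, exp_sum_split, mul_add, Complex.exp_add, hEdef]
    ring
  have h2 : ∫ x in T3, G (x + v) = (∫ x in T3, G x) * E := by
    simp_rw [hGv]
    exact MeasureTheory.integral_mul_const E G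
  rw [h2] at hshift
  have h3 : (∫ x in T3, G x) * (E - 1) = 0 := by
    rw [mul_sub, mul_one, hshift, sub_self]
  have h4 : (∫ x in T3, G x) = 0 := by
    rcases mul_eq_zero.1 h3 with h | h
    · exact h
    · exact absurd (sub_eq_zero.1 h) hE
  rw [fourierCoeff3]
  have : (∫ x in T3, (F x : ℂ) * Complex.exp (-Complex.I * ∑ i, (k i : ℂ) * ((x i:ℝ) : ℂ))) = 0 := h4
  rw [this, smul_zero]

/-- Full `2π`-periodicity from `(2π/m)`-periodicity. -/
lemma two_pi_periodic {F : (Fin 3 → ℝ) → ℝ} (m : ℕ) (hm : 0 < m)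
    (hper : ∀ (x : Fin 3 → ℝ) (j : Fin 3), F (x + (2 * Real.pi / m) • e3 j) = F x) :
    ∀ (x : Fin 3 → ℝ) (j : Fin 3), F (x + (2*Real.pi) • e3 j) = F x := by
  intro x j
  have key : ∀ (n : ℕ) (x : Fin 3 → ℝ), F (x + (n : ℝ) • ((2 * Real.pi / m) • e3 j)) = F x := by
    intro n
    induction n with
    | zero => intro x; simp
    | succ n ih =>
      intro x
      have e : x + ((n : ℕ) + 1 : ℝ) • ((2 * Real.pi / m) • e3 j)
          = (x + (2 * Real.pi / m) • e3 j) + (n : ℝ) • ((2 * Real.pi / m) • e3 j) := by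
        rw [add_smul, one_smul]; abel
      push_cast
      rw [e, ih (x + (2 * Real.pi / m) • e3 j), hper x j]
  have hm' : ((m:ℝ)) ≠ 0 := Nat.cast_ne_zero.2 hm.ne'
  have e : (m : ℝ) • ((2 * Real.pi / m) • e3 j) = (2*Real.pi) • e3 j := by
    rw [smul_smul]
    congr 1
    field_simp
  have := key m x
  rw [e] at this
  exact this

lemma coeff_eq_zero_of_not_dvd {F : (Fin 3 → ℝ) → ℝ} {k : Fin 3 → ℤ} (m : ℕ) (hm : 0 < m)
    (h2π : ∀ (x : Fin 3 → ℝ) (j : Fin 3), F (x + (2*Real.pi) • e3 j) = F x)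
    (hper : ∀ (x : Fin 3 → ℝ) (j : Fin 3), F (x + (2 * Real.pi / m) • e3 j) = F x)
    (j : Fin 3) (hj : ¬ ((m:ℤ) ∣ k j)) : fourierCoeff3 F k = 0 := by
  apply coeff_eq_zero h2π (fun x => hper x j)
  rw [sum_single_smul]
  intro hE
  rw [Complex.exp_eq_one_iff] at hE
  obtain ⟨n, hn⟩ := hE
  apply hj
  have hm' : ((m:ℝ)) ≠ 0 := Nat.cast_ne_zero.2 hm.ne'
  have h2 : ((-( (k j:ℝ) * (2*Real.pi/m)) :ℝ):ℂ) * Complex.I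
      = (((n:ℝ) * (2*Real.pi):ℝ):ℂ) * Complex.I := by
    push_cast
    push_cast at hn
    linear_combination hn
  have h3 := mul_right_cancel₀ Complex.I_ne_zero h2
  have h4 : -((k j:ℝ) * (2*Real.pi/m)) = (n:ℝ) * (2*Real.pi) := by exact_mod_cast h3
  have h5 : ((k j : ℝ) + (n:ℝ)*(m:ℝ)) * (2*Real.pi) = 0 := by
    field_simp at h4
    linear_combination (-(2*Real.pi)) * h4
  have h6 : (k j : ℝ) + (n:ℝ)*(m:ℝ) = 0 := by
    rcases mul_eq_zero.1 h5 with h | h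
    · exact h
    · exact absurd h (ne_of_gt twoPi_pos)
  have h7 : (k j : ℝ) = ((m * (-n) : ℤ) : ℝ) := by push_cast; linarith
  have h8 : k j = m * (-n) := by exact_mod_cast h7
  exact ⟨-n, h8⟩

lemma coeff_eq_zero_of_k2 {F : (Fin 3 → ℝ) → ℝ} {k : Fin 3 → ℤ}
    (h2π : ∀ (x : Fin 3 → ℝ) (j : Fin 3), F (x + (2*Real.pi) • e3 j) = F x)
    (hconst : ∀ (x : Fin 3 → ℝ) (t : ℝ), F (x + t • e3 2) = F x)
    (hk : k 2 ≠ 0) : fourierCoeff3 F k = 0 := by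
  apply coeff_eq_zero h2π (fun x => hconst x (Real.pi / (k 2 : ℝ)))
  rw [sum_single_smul]
  have hk' : ((k 2 : ℝ)) ≠ 0 := Int.cast_ne_zero.2 hk
  have hkc : ((k 2 : ℂ)) ≠ 0 := Int.cast_ne_zero.2 hk
  have e : ((k 2:ℂ) * ((Real.pi / (k 2:ℝ) : ℝ):ℂ)) = (Real.pi : ℂ) := by
    push_cast
    rw [mul_comm]
    exact div_mul_cancel₀ _ hkc
  rw [e]
  have e2 : -Complex.I * (Real.pi:ℂ) = -((Real.pi:ℂ) * Complex.I) := by ring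
  rw [e2, Complex.exp_neg, Complex.exp_pi_mul_I]
  norm_num

lemma coeff_norm_le (F : (Fin 3 → ℝ) → ℝ) (k : Fin 3 → ℤ) :
    ‖fourierCoeff3 F k‖ ≤ ∫ y in T3, |F y| := by
  have hint : 0 ≤ ∫ y in T3, |F y| := integral_nonneg (fun y => abs_nonneg _)
  rw [fourierCoeff3, norm_smul]
  have h1 : ‖∫ x in T3, (F x:ℂ) * Complex.exp (-Complex.I * ∑ i, (k i:ℂ)*((x i:ℝ):ℂ))‖
      ≤ ∫ x in T3, |F x| := by
    refine (norm_integral_le_integral_norm _).trans (le_of_eq ?_)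
    refine integral_congr_ae (Filter.Eventually.of_forall fun x => ?_)
    show ‖(F x:ℂ) * Complex.exp (-Complex.I * ∑ i, (k i:ℂ)*((x i:ℝ):ℂ))‖ = |F x|
    rw [norm_mul]
    have hsum : (∑ i, (k i:ℂ) * ((x i:ℝ):ℂ)) = (((∑ i, (k i:ℝ) * x i) : ℝ):ℂ) := by
      push_cast; ring
    have hexp : ‖Complex.exp (-Complex.I * ∑ i, (k i:ℂ)*((x i:ℝ):ℂ))‖ = 1 := by
      rw [hsum]
      rw [show (-Complex.I * (((∑ i, (k i:ℝ) * x i) : ℝ):ℂ))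
        = ((-(∑ i, (k i:ℝ) * x i) : ℝ) : ℂ) * Complex.I by push_cast; ring]
      rw [Complex.norm_exp_ofReal_mul_I]
    rw [hexp, mul_one, Complex.norm_real, Real.norm_eq_abs]
  have h2 : ‖(((2 * Real.pi)⁻¹ : ℝ) ^ (3:ℕ))‖ ≤ 1 := by
    rw [Real.norm_eq_abs, abs_of_nonneg (by positivity)]
    have : (2*Real.pi)⁻¹ ≤ 1 := by
      rw [inv_le_one_iff₀]
      right
      nlinarith [Real.pi_gt_three]
    calc ((2 * Real.pi)⁻¹ : ℝ) ^ (3:ℕ) ≤ 1^(3:ℕ) :=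
        pow_le_pow_left₀ (by positivity) this 3
      _ = 1 := one_pow _
  calc ‖(((2 * Real.pi)⁻¹ : ℝ) ^ (3:ℕ))‖ * ‖_‖ ≤ 1 * (∫ x in T3, |F x|) :=
      mul_le_mul h2 h1 (norm_nonneg _) zero_le_one
    _ = ∫ x in T3, |F x| := one_mul _

/-! ### Derivative bounds for characters -/

/-- The character `x ↦ exp(i k·x)`. -/
def expk (k : Fin 3 → ℤ) : (Fin 3 → ℝ) → ℂ :=
  fun x => Complex.exp (Complex.I * ∑ i, (k i : ℂ) * ((x i : ℝ) : ℂ))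

/-- The linear functional `x ↦ k·x`. -/
def Tk (k : Fin 3 → ℤ) : (Fin 3 → ℝ) →L[ℝ] ℝ :=
  ∑ i, (k i : ℝ) • ContinuousLinearMap.proj i

/-- The 1D complex exponential. -/
def e1c : ℝ → ℂ := fun t => Complex.exp (Complex.I * t)

lemma e1c_hasDerivAt (s : ℝ) : HasDerivAt e1c (Complex.I * e1c s) s := by
  have h1 : HasDerivAt (fun t : ℝ => (t:ℂ)) 1 s := by
    simpa using (hasDerivAt_id s).ofReal_comp
  have h2 : HasDerivAt (fun t : ℝ => Complex.I * (t:ℂ)) Complex.I s := by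
    simpa using h1.const_mul Complex.I
  have h3 := h2.cexp
  rw [show Complex.I * e1c s = Complex.exp (Complex.I * s) * Complex.I by unfold e1c; ring]
  exact h3

lemma e1c_contDiff {n : ℕ∞} : ContDiff ℝ n e1c := by
  have h1 : ContDiff ℝ n (fun t : ℝ => Complex.I * (t:ℂ)) :=
    contDiff_const.mul Complex.ofRealCLM.contDiff
  have h2 : ContDiff ℂ n Complex.exp := Complex.contDiff_exp
  exact (h2.restrict_scalars ℝ).comp h1

lemma iteratedDeriv_e1c (n : ℕ) : ∀ s : ℝ, iteratedDeriv n e1c s = Complex.I^n * e1c s := by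
  induction n with
  | zero => intro s; simp
  | succ n ih =>
    intro s
    rw [iteratedDeriv_succ]
    have hfn : iteratedDeriv n e1c = fun s => Complex.I^n * e1c s := funext ih
    rw [hfn]
    rw [((e1c_hasDerivAt s).const_mul (Complex.I^n)).deriv]
    ring

lemma norm_iteratedFDeriv_e1c (n : ℕ) (s : ℝ) : ‖iteratedFDeriv ℝ n e1c s‖ = 1 := by
  rw [norm_iteratedFDeriv_eq_norm_iteratedDeriv, iteratedDeriv_e1c]
  rw [norm_mul, norm_pow, Complex.norm_I, one_pow, one_mul]
  show ‖Complex.exp (Complex.I * (s:ℂ))‖ = 1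
  rw [show Complex.I * (s:ℂ) = (s:ℂ) * Complex.I from mul_comm _ _]
  rw [Complex.norm_exp_ofReal_mul_I]

lemma Tk_apply (k : Fin 3 → ℤ) (x : Fin 3 → ℝ) : Tk k x = ∑ i, (k i:ℝ) * x i := by
  simp [Tk]

lemma expk_eq (k : Fin 3 → ℤ) : expk k = e1c ∘ (Tk k) := by
  funext x
  simp only [expk, e1c, Function.comp_apply, Tk_apply]
  congr 1
  push_cast
  ring

lemma knorm_nonneg (k : Fin 3 → ℤ) : 0 ≤ knorm k := Real.sqrt_nonneg _

lemma abs_le_knorm (k : Fin 3 → ℤ) (i : Fin 3) : |(k i:ℝ)| ≤ knorm k := by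
  rw [knorm, ← Real.sqrt_sq_eq_abs]
  exact Real.sqrt_le_sqrt
    (Finset.single_le_sum (f := fun i => ((k i:ℝ))^2) (fun i _ => sq_nonneg _) (Finset.mem_univ i))

lemma Tk_norm_le (k : Fin 3 → ℤ) : ‖Tk k‖ ≤ 3 * knorm k := by
  have hproj : ∀ i : Fin 3,
      ‖(ContinuousLinearMap.proj i : ((Fin 3 → ℝ)) →L[ℝ] ℝ)‖ ≤ 1 := fun i =>
    ContinuousLinearMap.opNorm_le_bound _ zero_le_one
      (fun x => by simpa using norm_le_pi_norm x i)
  calc ‖Tk k‖ ≤ ∑ i, ‖(k i:ℝ) • (ContinuousLinearMap.proj i : ((Fin 3 → ℝ)) →L[ℝ] ℝ)‖ :=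
      norm_sum_le _ _
    _ ≤ ∑ i : Fin 3, |(k i:ℝ)| := by
      refine Finset.sum_le_sum fun i _ => ?_
      refine le_trans (le_of_eq (norm_smul (k i : ℝ)
        (ContinuousLinearMap.proj i : ((Fin 3 → ℝ)) →L[ℝ] ℝ))) ?_
      rw [Real.norm_eq_abs]
      calc |(k i:ℝ)| * ‖(ContinuousLinearMap.proj i : ((Fin 3 → ℝ)) →L[ℝ] ℝ)‖
          ≤ |(k i:ℝ)| * 1 := mul_le_mul_of_nonneg_left (hproj i) (abs_nonneg _)
        _ = |(k i:ℝ)| := mul_one _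
    _ ≤ 3 * knorm k := by
      rw [Fin.sum_univ_three]
      have h0 := abs_le_knorm k 0
      have h1 := abs_le_knorm k 1
      have h2 := abs_le_knorm k 2
      linarith

lemma expk_contDiff (k : Fin 3 → ℤ) {n : ℕ∞} : ContDiff ℝ n (expk k) := by
  rw [expk_eq]
  exact e1c_contDiff.comp (Tk k).contDiff

lemma norm_iteratedFDeriv_expk (k : Fin 3 → ℤ) (N : ℕ) (x : Fin 3 → ℝ) :
    ‖iteratedFDeriv ℝ N (expk k) x‖ ≤ (3 * knorm k)^N := by
  rw [expk_eq]
  rw [ContinuousLinearMap.iteratedFDeriv_comp_right (Tk k) (e1c_contDiff (n := (N:ℕ∞))) x le_rfl]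
  refine (ContinuousMultilinearMap.norm_compContinuousLinearMap_le _ _).trans ?_
  rw [norm_iteratedFDeriv_e1c, one_mul]
  rw [Finset.prod_const, Finset.card_univ, Fintype.card_fin]
  exact pow_le_pow_left₀ (norm_nonneg _) (Tk_norm_le k) N

lemma term_bound (a : ℂ) (k : Fin 3 → ℤ) (N : ℕ) (x : Fin 3 → ℝ) :
    ‖iteratedFDeriv ℝ N (fun x => a * expk k x) x‖ ≤ ‖a‖ * (3 * knorm k)^N := by
  have h1 : (fun x => a * expk k x) = a • expk k := funext fun x => rfl
  rw [h1, iteratedFDeriv_const_smul_apply (expk_contDiff k).contDiffAt]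
  refine le_trans (ContinuousMultilinearMap.opNorm_smul_le a (iteratedFDeriv ℝ N (expk k) x)) ?_
  exact mul_le_mul_of_nonneg_left (norm_iteratedFDeriv_expk k N x) (norm_nonneg a)

/-- The master estimate: `L∞` bound for derivatives of a frequency-localized sum in terms of
the number of active frequencies and the size of the symbol. -/
lemma main_bound (w : (Fin 3 → ℤ) → ℝ) (l₁ l₂ : ℝ) (F : (Fin 3 → ℝ) → ℝ) (N : ℕ)
    (s : Finset (Fin 3 → ℤ))
    (hsupp : ∀ k ∉ s, fourierCoeff3 F k = 0 ∨ ¬ (l₁ ≤ knorm k ∧ knorm k < l₂))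
    (W : ℝ) (hW : 0 ≤ W)
    (hwb : ∀ k : Fin 3 → ℤ, l₁ ≤ knorm k → knorm k < l₂ → |w k| * (knorm k)^N ≤ W)
    (x : Fin 3 → ℝ) :
    ‖iteratedFDeriv ℝ N (fourierProj w l₁ l₂ F) x‖
      ≤ (s.card : ℝ) * ((3:ℝ)^N * W * ∫ y in T3, |F y|) := by
  have hint : 0 ≤ ∫ y in T3, |F y| := integral_nonneg (fun y => abs_nonneg _)
  set g : (Fin 3 → ℤ) → (Fin 3 → ℝ) → ℂ :=
    fun k x => if l₁ ≤ knorm k ∧ knorm k < l₂ then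
      (w k : ℂ) * fourierCoeff3 F k * expk k x else 0 with hg
  have hfn : fourierProj w l₁ l₂ F = fun x => ∑ k ∈ s, g k x := by
    funext x
    rw [fourierProj]
    refine tsum_eq_sum fun k hk => ?_
    rcases hsupp k hk with h | h
    · simp only [h, mul_zero, zero_mul, ite_self]
    · rw [if_neg h]
  have hgcd : ∀ k ∈ s, ContDiff ℝ (N:ℕ∞) (g k) := by
    intro k _
    rw [hg]
    by_cases hc : l₁ ≤ knorm k ∧ knorm k < l₂
    · simp only [if_pos hc]
      exact contDiff_const.mul (expk_contDiff k)
    · simp only [if_neg hc]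
      exact contDiff_const
  rw [hfn, iteratedFDeriv_sum hgcd, Finset.sum_apply]
  refine (norm_sum_le s (fun k => iteratedFDeriv ℝ N (g k) x)).trans ?_
  have hbound : ∀ k ∈ s, ‖iteratedFDeriv ℝ N (g k) x‖ ≤ (3:ℝ)^N * W * ∫ y in T3, |F y| := by
    intro k _
    rw [hg]
    by_cases hc : l₁ ≤ knorm k ∧ knorm k < l₂
    · simp only [if_pos hc]
      have he : (fun x => (w k : ℂ) * fourierCoeff3 F k * expk k x)
          = fun x => ((w k : ℂ) * fourierCoeff3 F k) * expk k x := by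
        funext x; ring
      calc ‖iteratedFDeriv ℝ N (fun x => (w k : ℂ) * fourierCoeff3 F k * expk k x) x‖
          ≤ ‖(w k : ℂ) * fourierCoeff3 F k‖ * (3 * knorm k)^N := by
            rw [he]; exact term_bound _ k N x
        _ = (|w k| * ‖fourierCoeff3 F k‖) * ((3:ℝ)^N * (knorm k)^N) := by
            rw [norm_mul, Complex.norm_real, Real.norm_eq_abs, mul_pow]
        _ = (3:ℝ)^N * ((|w k| * (knorm k)^N) * ‖fourierCoeff3 F k‖) := by ring
        _ ≤ (3:ℝ)^N * (W * ∫ y in T3, |F y|) := by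
            refine mul_le_mul_of_nonneg_left ?_ (by positivity)
            exact mul_le_mul (hwb k hc.1 hc.2) (coeff_norm_le F k) (norm_nonneg _) hW
        _ = (3:ℝ)^N * W * ∫ y in T3, |F y| := by ring
    · simp only [if_neg hc]
      rw [iteratedFDeriv_zero_fun]
      simp only [Pi.zero_apply, norm_zero]
      positivity
  calc ∑ k ∈ s, ‖iteratedFDeriv ℝ N (g k) x‖
      ≤ s.card • ((3:ℝ)^N * W * ∫ y in T3, |F y|) := Finset.sum_le_card_nsmul s _ _ hbound
    _ = (s.card : ℝ) * ((3:ℝ)^N * W * ∫ y in T3, |F y|) := nsmul_eq_mul _ _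

lemma weight_bound (N d : ℕ) (l₁ l₂ q : ℝ) (h0 : 0 < l₁) (h1 : l₁ ≤ q) (h2 : q < l₂) :
    (l₁ / q)^(2*d) * q^N ≤ l₁^(min N (2*d)) * l₂^(N - 2*d) := by
  have hq : 0 < q := h0.trans_le h1
  by_cases hN : N ≤ 2*d
  · rw [min_eq_left hN, Nat.sub_eq_zero_of_le hN, pow_zero, mul_one]
    have hle1 : l₁ / q ≤ 1 := (div_le_one hq).2 h1
    have h3 : (l₁/q)^(2*d) ≤ (l₁/q)^N := pow_le_pow_of_le_one (by positivity) hle1 hN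
    calc (l₁/q)^(2*d) * q^N ≤ (l₁/q)^N * q^N :=
        mul_le_mul_of_nonneg_right h3 (by positivity)
      _ = l₁^N := by rw [← mul_pow, div_mul_cancel₀ _ hq.ne']
  · push_neg at hN
    rw [min_eq_right hN.le]
    have hsplit : q^N = q^(2*d) * q^(N - 2*d) := by
      rw [← pow_add]
      congr 1
      omega
    rw [div_pow, hsplit]
    have he : l₁^(2*d)/q^(2*d) * (q^(2*d) * q^(N-2*d)) = l₁^(2*d) * q^(N-2*d) := by
      field_simp
    rw [he]
    exact mul_le_mul_of_nonneg_left (pow_le_pow_left₀ hq.le h2.le _) (by positivity)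

end PipeAux

/-- **Sharp `L^∞` bounds for frequency-localized squared pipe densities.** For a smooth
`(𝕋³/m)`-periodic function `F`, constant in the `x₃` direction, and `m ≤ λ₁ < λ₂`:
`‖D^N P_{[λ₁,λ₂)}F‖_∞ ≲ (λ₂/m)² λ₂^N ‖F‖_{L¹}` and, with `ϑ = (λ₁^{-2}Δ)^{-d}P_{[λ₁,λ₂)}F`,
`‖D^N ϑ‖_∞ ≲ (λ₂/m)² λ₁^{min(N,2d)} λ₂^{max(N-2d,0)} ‖F‖_{L¹}`, with constants independent
of `m, λ₁, λ₂, F`. -/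
theorem projected_pipe_density_bounds (N d : ℕ) (hd : 1 ≤ d) :
    ∃ C : ℝ, ∀ (m : ℕ), 0 < m → ∀ (l₁ l₂ : ℝ), (m : ℝ) ≤ l₁ → l₁ < l₂ →
      ∀ F : (Fin 3 → ℝ) → ℝ, ContDiff ℝ (⊤ : ℕ∞) F →
      (∀ (x : Fin 3 → ℝ) (j : Fin 3), F (x + (2 * Real.pi / m) • e3 j) = F x) →
      (∀ (x : Fin 3 → ℝ) (t : ℝ), F (x + t • e3 2) = F x) →
      (∀ x, ‖iteratedFDeriv ℝ N (fourierProj (fun _ => 1) l₁ l₂ F) x‖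
          ≤ C * (l₂ / m)^2 * l₂ ^ N * ∫ y in T3, |F y|) ∧
      (∀ x, ‖iteratedFDeriv ℝ N
            (fourierProj (fun k => (l₁ / knorm k)^(2*d)) l₁ l₂ F) x‖
          ≤ C * (l₂ / m)^2 * l₁ ^ (min N (2*d)) * l₂ ^ (N - 2*d) * ∫ y in T3, |F y|) := by
  classical
  refine ⟨9 * 3^N, ?_⟩
  intro m hm l₁ l₂ hml₁ hl₁₂ F _hFsmooth hFper hFconst
  have hm0 : (0:ℝ) < m := by exact_mod_cast hm
  have h1m : (1:ℝ) ≤ m := by exact_mod_cast hm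
  have hl₁pos : 0 < l₁ := lt_of_lt_of_le hm0 hml₁
  have hl₂pos : 0 < l₂ := hl₁pos.trans hl₁₂
  have hl2m1 : 1 ≤ l₂ / (m:ℝ) := (one_le_div hm0).2 (le_of_lt (lt_of_le_of_lt hml₁ hl₁₂))
  have hint : 0 ≤ ∫ y in T3, |F y| := integral_nonneg (fun y => abs_nonneg _)
  have h2π : ∀ (x : Fin 3 → ℝ) (j : Fin 3), F (x + (2*Real.pi) • e3 j) = F x :=
    PipeAux.two_pi_periodic m hm hFper
  -- the support finset
  set B : ℤ := ⌊l₂ / (m:ℝ)⌋ with hB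
  have hB1 : 1 ≤ B := by
    rw [hB]
    exact Int.le_floor.2 (by simpa using hl2m1)
  set emb : ℤ × ℤ → (Fin 3 → ℤ) := fun p => ![(m:ℤ) * p.1, (m:ℤ) * p.2, 0] with hemb
  set s : Finset (Fin 3 → ℤ) :=
    Finset.image emb (Finset.Icc (-B) B ×ˢ Finset.Icc (-B) B) with hs
  -- support property
  have hsupp : ∀ k ∉ s, fourierCoeff3 F k = 0 ∨ ¬ (l₁ ≤ knorm k ∧ knorm k < l₂) := by
    intro k hk
    by_cases hcond : l₁ ≤ knorm k ∧ knorm k < l₂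
    · left
      by_contra hC
      have hd0 : (m:ℤ) ∣ k 0 := by
        by_contra h
        exact hC (PipeAux.coeff_eq_zero_of_not_dvd m hm h2π hFper 0 h)
      have hd1 : (m:ℤ) ∣ k 1 := by
        by_contra h
        exact hC (PipeAux.coeff_eq_zero_of_not_dvd m hm h2π hFper 1 h)
      have hk2 : k 2 = 0 := by
        by_contra h
        exact hC (PipeAux.coeff_eq_zero_of_k2 h2π hFconst h)
      obtain ⟨a, ha⟩ := hd0
      obtain ⟨b, hb⟩ := hd1
      apply hk
      rw [hs]
      refine Finset.mem_image.2 ⟨(a, b), ?_, ?_⟩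
      · -- bounds
        have hbnd : ∀ (c : ℤ) (i : Fin 3), k i = (m:ℤ) * c → -B ≤ c ∧ c ≤ B := by
          intro c i hc
          have h1 : |(k i : ℝ)| ≤ knorm k := PipeAux.abs_le_knorm k i
          have h2 : |(k i : ℝ)| < l₂ := lt_of_le_of_lt h1 hcond.2
          have h3 : (m:ℝ) * |(c:ℝ)| < l₂ := by
            rw [← abs_of_pos hm0, ← abs_mul]
            have : ((m:ℝ) * (c:ℝ)) = (k i : ℝ) := by exact_mod_cast hc.symm
            rw [this]
            exact h2
          have h4 : |(c:ℝ)| < l₂ / m := by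
            rw [lt_div_iff₀ hm0]
            linarith [h3]
          constructor
          · rw [hB, neg_le]
            refine Int.le_floor.2 ?_
            push_cast
            have := abs_le.1 h4.le
            linarith [this.1]
          · rw [hB]
            refine Int.le_floor.2 ?_
            have := abs_le.1 h4.le
            exact this.2
        obtain ⟨ha1, ha2⟩ := hbnd a 0 ha
        obtain ⟨hb1, hb2⟩ := hbnd b 1 hb
        exact Finset.mem_product.2 ⟨Finset.mem_Icc.2 ⟨ha1, ha2⟩, Finset.mem_Icc.2 ⟨hb1, hb2⟩⟩
      · rw [hemb]
        funext i
        fin_cases i <;> simp [ha, hb, hk2]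
    · right; exact hcond
  -- cardinality bound
  have hcard : (s.card : ℝ) ≤ 9 * (l₂/m)^2 := by
    have h1 : s.card ≤ ((2*B+1).toNat) * ((2*B+1).toNat) := by
      rw [hs]
      refine (Finset.card_image_le).trans ?_
      rw [Finset.card_product, Int.card_Icc]
      have : B + 1 - (-B) = 2*B + 1 := by ring
      rw [this]
    have h2 : (((2*B+1).toNat : ℤ) : ℝ) = ((2*B+1 : ℤ) : ℝ) := by
      congr 1
      exact Int.toNat_of_nonneg (by linarith)
    have h3 : ((2*B+1 : ℤ) : ℝ) ≤ 3 * (l₂/m) := by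
      push_cast
      have hfl : ((B:ℝ)) ≤ l₂ / m := by
        rw [hB]; exact Int.floor_le _
      linarith
    have h4 : (s.card : ℝ) ≤ (3 * (l₂/m)) * (3 * (l₂/m)) := by
      have hcast : (s.card : ℝ) ≤ (((2*B+1).toNat : ℕ) : ℝ) * (((2*B+1).toNat : ℕ) : ℝ) := by
        exact_mod_cast h1
      refine hcast.trans ?_
      have hnn : (0:ℝ) ≤ (((2*B+1).toNat : ℕ) : ℝ) := Nat.cast_nonneg _
      have heq : (((2*B+1).toNat : ℕ) : ℝ) ≤ 3 * (l₂/m) := by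
        have : (((2*B+1).toNat : ℕ) : ℝ) = (((2*B+1).toNat : ℤ) : ℝ) := by push_cast; ring
        rw [this, h2]
        exact h3
      exact mul_le_mul heq heq hnn (by linarith)
    calc (s.card : ℝ) ≤ (3 * (l₂/m)) * (3 * (l₂/m)) := h4
      _ = 9 * (l₂/m)^2 := by ring
  constructor
  · -- part (i)
    intro x
    have hwb : ∀ k : Fin 3 → ℤ, l₁ ≤ knorm k → knorm k < l₂ →
        |(1:ℝ)| * (knorm k)^N ≤ l₂^N := by
      intro k _ h2
      rw [abs_one, one_mul]
      exact pow_le_pow_left₀ (PipeAux.knorm_nonneg k) h2.le N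
    have := PipeAux.main_bound (fun _ => 1) l₁ l₂ F N s hsupp (l₂^N) (by positivity) hwb x
    refine this.trans ?_
    calc (s.card : ℝ) * ((3:ℝ)^N * l₂^N * ∫ y in T3, |F y|)
        ≤ (9 * (l₂/m)^2) * ((3:ℝ)^N * l₂^N * ∫ y in T3, |F y|) := by
          refine mul_le_mul_of_nonneg_right hcard (by positivity)
      _ = 9 * 3^N * (l₂ / m)^2 * l₂ ^ N * ∫ y in T3, |F y| := by ring
  · -- part (ii)
    intro x
    have hwb : ∀ k : Fin 3 → ℤ, l₁ ≤ knorm k → knorm k < l₂ →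
        |(l₁ / knorm k)^(2*d)| * (knorm k)^N ≤ l₁^(min N (2*d)) * l₂^(N - 2*d) := by
      intro k h1 h2
      have hq : 0 < knorm k := lt_of_lt_of_le hl₁pos h1
      rw [abs_of_nonneg (by positivity)]
      exact PipeAux.weight_bound N d l₁ l₂ (knorm k) hl₁pos h1 h2
    have := PipeAux.main_bound (fun k => (l₁ / knorm k)^(2*d)) l₁ l₂ F N s hsupp
      (l₁^(min N (2*d)) * l₂^(N - 2*d)) (by positivity) hwb x
    refine this.trans ?_
    calc (s.card : ℝ) * ((3:ℝ)^N * (l₁^(min N (2*d)) * l₂^(N - 2*d)) * ∫ y in T3, |F y|)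
        ≤ (9 * (l₂/m)^2) * ((3:ℝ)^N * (l₁^(min N (2*d)) * l₂^(N - 2*d)) * ∫ y in T3, |F y|) := by
          refine mul_le_mul_of_nonneg_right hcard (by positivity)
      _ = 9 * 3^N * (l₂ / m)^2 * l₁ ^ (min N (2*d)) * l₂ ^ (N - 2*d) * ∫ y in T3, |F y| := by
          ring
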